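/- Let G_D be a directed graph in which every vertex has in-degree at most one, and let G_U be its underlying undirected graph. Then no two vertex-disjoint cycles of G_U lie in the same connected component of G_U. -/

import Mathlib

open SimpleGraph

section aux
variable {V : Type*} {D : V → V → Prop} {G : SimpleGraph V}

/-- Every vertex of a cycle has an in-neighbor within the cycle. -/
lemma cycle_in_neighbor
    (hdeg : ∀ v : V, {u : V | D u v}.Subsingleton)
    (hG : ∀ u v, G.Adj u v ↔ u ≠ v ∧ (D u v ∨ D v u))
    {a : V} (c : G.Walk a a) (hc : c.IsCycle) :
    ∀ v ∈ c.support, ∃ u ∈ c.support, D u v := by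
  classical
  set f : Sym2 V → V := fun e =>
    if h : ∃ v u, e = s(u, v) ∧ D u v then h.choose else (Quot.out e).1 with hf
  have hhead : ∀ e ∈ c.edges, ∃ u, e = s(u, f e) ∧ D u (f e) := by
    intro e he
    have hadj : e ∈ G.edgeSet := c.edges_subset_edgeSet he
    induction e using Sym2.inductionOn with
    | hf x y =>
      rw [SimpleGraph.mem_edgeSet, hG] at hadj
      have h : ∃ v u, s(x, y) = s(u, v) ∧ D u v := by
        rcases hadj.2 with h | h
        · exact ⟨y, x, rfl, h⟩
        · exact ⟨x, y, Sym2.eq_swap, h⟩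
      simpa only [hf, dif_pos h] using h.choose_spec
  -- injectivity of f on the edges
  have hinj : Set.InjOn f (c.edges.toFinset : Set (Sym2 V)) := by
    intro e₁ he₁ e₂ he₂ hfe
    simp only [Finset.coe_sort_coe, List.coe_toFinset, Set.mem_setOf_eq] at he₁ he₂
    obtain ⟨u₁, heq₁, hd₁⟩ := hhead e₁ (by simpa using he₁)
    obtain ⟨u₂, heq₂, hd₂⟩ := hhead e₂ (by simpa using he₂)
    rw [hfe] at hd₁
    have : u₁ = u₂ := hdeg (f e₂) hd₁ hd₂
    rw [heq₁, heq₂, hfe, this]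
  have hnotnil : ¬ c.Nil := hc.not_nil
  have hamem : a ∈ c.support.tail := by
    have := c.tail.end_mem_support
    rwa [SimpleGraph.Walk.support_tail_of_not_nil c hnotnil] at this
  have hsupmem : ∀ v, v ∈ c.support ↔ v ∈ c.support.tail := by
    intro v
    constructor
    · intro hv
      rw [c.support_eq_cons] at hv
      rcases List.mem_cons.mp hv with rfl | hv
      · exact hamem
      · exact hv
    · intro hv
      exact List.mem_of_mem_tail hv
  -- cardinalities
  have hcardE : c.edges.toFinset.card = c.length := by
    rw [List.toFinset_card_of_nodup hc.edges_nodup, c.length_edges]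
  have hcardS : c.support.tail.toFinset.card = c.length := by
    rw [List.toFinset_card_of_nodup hc.support_nodup, List.length_tail,
      c.length_support]
    omega
  -- image of f lies in the support tail
  have himg : c.edges.toFinset.image f ⊆ c.support.tail.toFinset := by
    intro v hv
    rw [Finset.mem_image] at hv
    obtain ⟨e, he, rfl⟩ := hv
    rw [List.mem_toFinset] at he
    obtain ⟨u, heq, _⟩ := hhead e he
    rw [List.mem_toFinset, ← hsupmem]
    exact c.snd_mem_support_of_mem_edges (heq ▸ he)
  have himg' : c.edges.toFinset.image f = c.support.tail.toFinset := by
    apply Finset.eq_of_subset_of_card_le himg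
    rw [hcardS, Finset.card_image_of_injOn hinj, hcardE]
  intro v hv
  have hv' : v ∈ c.edges.toFinset.image f := by
    rw [himg', List.mem_toFinset, ← hsupmem]; exact hv
  rw [Finset.mem_image] at hv'
  obtain ⟨e, he, hfe⟩ := hv'
  rw [List.mem_toFinset] at he
  obtain ⟨u, heq, hd⟩ := hhead e he
  rw [hfe] at heq hd
  exact ⟨u, c.fst_mem_support_of_mem_edges (heq ▸ he), hd⟩

end aux

/-- In the underlying undirected graph of a digraph with in-degree at most one,
no two vertex-disjoint cycles lie in the same connected component. -/
theorem stmt2 {V : Type*} [Fintype V] (D : V → V → Prop)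
    (hdeg : ∀ v : V, {u : V | D u v}.Subsingleton)
    (G : SimpleGraph V)
    (hG : ∀ u v, G.Adj u v ↔ u ≠ v ∧ (D u v ∨ D v u))
    (a b : V) (c₁ : G.Walk a a) (c₂ : G.Walk b b)
    (h₁ : c₁.IsCycle) (h₂ : c₂.IsCycle)
    (hdisj : ∀ v : V, v ∈ c₁.support → v ∈ c₂.support → False)
    (hreach : G.Reachable a b) : False := by
  classical
  have hin₁ := cycle_in_neighbor hdeg hG c₁ h₁
  have hin₂ := cycle_in_neighbor hdeg hG c₂ h₂
  -- transport directed-reachability from c₂ backward along an undirected walk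
  have key : ∀ (x y : V) (p : G.Walk x y),
      (∃ w ∈ c₂.support, Relation.ReflTransGen D w y) →
      ∃ w ∈ c₂.support, Relation.ReflTransGen D w x := by
    intro x y p
    induction p with
    | nil => exact fun h => h
    | @cons u u' y' h q ih =>
      intro hy
      obtain ⟨w, hw, hwy⟩ := ih hy
      rw [hG] at h
      rcases h.2 with hd | hd
      · -- D u u' : u is the unique in-neighbor of u'
        rcases (Relation.ReflTransGen.cases_tail hwy) with rfl | ⟨z, hwz, hzy⟩
        · obtain ⟨u₀, hu₀, hd'⟩ := hin₂ u' hw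
          have : u = u₀ := hdeg u' hd hd'
          exact ⟨u, this ▸ hu₀, Relation.ReflTransGen.refl⟩
        · have : z = u := hdeg u' hzy hd
          exact ⟨w, hw, this ▸ hwz⟩
      · exact ⟨w, hw, hwy.tail hd⟩
  obtain ⟨w, hw, hwa⟩ := key a b hreach.some
    ⟨b, c₂.start_mem_support, Relation.ReflTransGen.refl⟩
  -- a directed path from w into c₁ forces w ∈ c₁
  have hwc₁ : ∀ v, Relation.ReflTransGen D w v → v ∈ c₁.support → w ∈ c₁.support := by
    intro v hwv
    induction hwv with
    | refl => exact fun h => h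
    | @tail z v' hwz hzv ih =>
      intro hv
      obtain ⟨u₀, hu₀, hd'⟩ := hin₁ v' hv
      have : z = u₀ := hdeg v' hzv hd'
      exact ih (this ▸ hu₀)
  exact hdisj w (hwc₁ a hwa c₁.start_mem_support) hw
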